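/- Let c ≥ 0 and let (n_q)_{q∈ℕ} be a sequence of natural numbers with n_q ≤ q for all q and n_q²/q → c as q → ∞. Then the ratio of binomial coefficients C(2q, q−n_q) / C(2q, q) converges to exp(−c) as q → ∞. -/

import Mathlib

open Filter Finset

private lemma sum_odd_aux (n : ℕ) : ∑ j ∈ Finset.range n, (2*(j:ℝ)+1) = (n:ℝ)^2 := by
  induction n with
  | zero => simp
  | succ m ih => rw [Finset.sum_range_succ, ih]; push_cast; ring

private lemma choose_ratio_aux (q : ℕ) : ∀ n : ℕ, n ≤ q →
    (((2*q).choose (q - n) : ℝ)) =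
      ((2*q).choose q : ℝ) * ∏ j ∈ Finset.range n, ((q:ℝ) - j) / ((q:ℝ) + j + 1) := by
  intro n
  induction n with
  | zero => intro _; simp
  | succ m ih =>
    intro h
    have hm : m ≤ q := by omega
    have key := Nat.choose_succ_right_eq (2*q) (q - (m+1))
    have e1 : q - (m+1) + 1 = q - m := by omega
    have e2 : 2*q - (q - (m+1)) = q + m + 1 := by omega
    rw [e1, e2] at key
    have hA : ((2*q).choose (q-m) : ℝ) * ((q:ℝ) - m) =
        ((2*q).choose (q-(m+1)) : ℝ) * ((q:ℝ) + m + 1) := by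
      have := congrArg (Nat.cast : ℕ → ℝ) key
      push_cast [Nat.cast_sub hm] at this
      linarith [this]
    have hpos : (0:ℝ) < (q:ℝ) + m + 1 := by positivity
    rw [Finset.prod_range_succ, ← mul_assoc, ← ih hm]
    field_simp
    linarith [hA]

private lemma prod_upper_aux (q nn : ℕ) (h : nn ≤ q) :
    ∏ j ∈ Finset.range nn, ((q:ℝ) - j) / ((q:ℝ) + j + 1)
      ≤ Real.exp (-((nn:ℝ)^2 / ((q:ℝ) + nn))) := by
  rcases Nat.eq_zero_or_pos nn with h0 | h0
  · subst h0; simp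
  have hqn : (0:ℝ) < (q:ℝ) + nn := by
    have : 0 < q := lt_of_lt_of_le h0 h
    have : (1:ℝ) ≤ (q:ℝ) := by exact_mod_cast this
    positivity
  calc ∏ j ∈ Finset.range nn, ((q:ℝ) - j) / ((q:ℝ) + j + 1)
      ≤ ∏ j ∈ Finset.range nn, Real.exp (-((2*(j:ℝ)+1) / ((q:ℝ) + nn))) := by
        apply Finset.prod_le_prod
        · intro j hj
          simp only [Finset.mem_range] at hj
          have hjq : (j:ℝ) ≤ q := by exact_mod_cast le_trans hj.le h
          have hd : (0:ℝ) < (q:ℝ) + j + 1 := by positivity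
          apply div_nonneg (by linarith) hd.le
        · intro j hj
          simp only [Finset.mem_range] at hj
          have hjq : (j:ℝ) ≤ q := by exact_mod_cast le_trans hj.le h
          have hd : (0:ℝ) < (q:ℝ) + j + 1 := by positivity
          have hjn : (j:ℝ) + 1 ≤ (nn:ℝ) := by exact_mod_cast hj
          have e : ((q:ℝ) - j) / ((q:ℝ) + j + 1) = 1 - (2*(j:ℝ)+1)/((q:ℝ)+j+1) := by
            field_simp; ring
          calc ((q:ℝ) - j) / ((q:ℝ) + j + 1)
              = 1 - (2*(j:ℝ)+1)/((q:ℝ)+j+1) := e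
            _ ≤ Real.exp (-((2*(j:ℝ)+1)/((q:ℝ)+j+1))) := by
                have := Real.add_one_le_exp (-((2*(j:ℝ)+1)/((q:ℝ)+j+1)))
                linarith
            _ ≤ Real.exp (-((2*(j:ℝ)+1) / ((q:ℝ) + nn))) := by
                apply Real.exp_le_exp.mpr
                apply neg_le_neg
                apply div_le_div_of_nonneg_left (by positivity) hd (by linarith)
      _ = Real.exp (∑ j ∈ Finset.range nn, -((2*(j:ℝ)+1) / ((q:ℝ) + nn))) :=
          (Real.exp_sum _ _).symm
      _ = Real.exp (-((nn:ℝ)^2 / ((q:ℝ) + nn))) := by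
          congr 1
          have := sum_odd_aux nn
          rw [Finset.sum_neg_distrib, ← Finset.sum_div, this]

private lemma prod_lower_aux (q nn : ℕ) (h : nn ≤ q) :
    Real.exp (-((nn:ℝ)^2 / ((q:ℝ) - nn + 1)))
      ≤ ∏ j ∈ Finset.range nn, ((q:ℝ) - j) / ((q:ℝ) + j + 1) := by
  have hnq : (nn:ℝ) ≤ (q:ℝ) := by exact_mod_cast h
  have hden : (0:ℝ) < (q:ℝ) - nn + 1 := by linarith
  calc Real.exp (-((nn:ℝ)^2 / ((q:ℝ) - nn + 1)))
      = ∏ j ∈ Finset.range nn, Real.exp (-((2*(j:ℝ)+1) / ((q:ℝ) - nn + 1))) := by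
        rw [← Real.exp_sum]
        congr 1
        symm
        rw [Finset.sum_neg_distrib, ← Finset.sum_div, sum_odd_aux]
    _ ≤ ∏ j ∈ Finset.range nn, ((q:ℝ) - j) / ((q:ℝ) + j + 1) := by
        apply Finset.prod_le_prod
        · intro j _; positivity
        · intro j hj
          simp only [Finset.mem_range] at hj
          have hjn : (j:ℝ) + 1 ≤ (nn:ℝ) := by exact_mod_cast hj
          have hqj : (0:ℝ) < (q:ℝ) - j := by linarith
          have h1 : (q:ℝ) - nn + 1 ≤ (q:ℝ) - j := by linarith
          set t : ℝ := (2*(j:ℝ)+1) / ((q:ℝ) - j) with ht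
          have htpos : 0 < t := by positivity
          have step1 : Real.exp (-((2*(j:ℝ)+1) / ((q:ℝ) - nn + 1))) ≤ Real.exp (-t) := by
            apply Real.exp_le_exp.mpr
            apply neg_le_neg
            exact div_le_div_of_nonneg_left (by positivity) hden h1
          have step2 : Real.exp (-t) ≤ ((q:ℝ) - j) / ((q:ℝ) + j + 1) := by
            have hexp : 1 + t ≤ Real.exp t := by
              have := Real.add_one_le_exp t; linarith
            have heq : (1:ℝ) + t = ((q:ℝ) + j + 1) / ((q:ℝ) - j) := by
              rw [ht]; field_simp; ring
            have hpos : (0:ℝ) < 1 + t := by linarith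
            rw [Real.exp_neg]
            rw [inv_le_comm₀ (Real.exp_pos t) (by positivity)]
            calc (((q:ℝ) - j) / ((q:ℝ) + j + 1))⁻¹ = ((q:ℝ) + j + 1) / ((q:ℝ) - j) := by
                  rw [inv_div]
              _ = 1 + t := heq.symm
              _ ≤ Real.exp t := hexp
          exact le_trans step1 step2

/-- If `n_q ≤ q` and `n_q²/q → c ≥ 0`, then `C(2q, q−n_q)/C(2q, q) → exp(−c)`. -/
theorem stmt_2 (c : ℝ) (hc : 0 ≤ c) (n : ℕ → ℕ) (hn : ∀ q, n q ≤ q)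
    (hlim : Tendsto (fun q : ℕ => ((n q : ℝ))^2 / (q : ℝ)) atTop (nhds c)) :
    Tendsto (fun q : ℕ => (((2*q).choose (q - n q) : ℝ)) / ((2*q).choose q : ℝ))
      atTop (nhds (Real.exp (-c))) := by
  -- 1/q → 0
  have hq0 : Tendsto (fun q : ℕ => ((q:ℝ))⁻¹) atTop (nhds 0) :=
    tendsto_inv_atTop_zero.comp tendsto_natCast_atTop_atTop
  -- n q / q → 0
  have hfrac : Tendsto (fun q : ℕ => (n q : ℝ) / q) atTop (nhds 0) := by
    have h1 : Tendsto (fun q : ℕ => Real.sqrt ((n q : ℝ)^2 / q)) atTop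
        (nhds (Real.sqrt c)) := (Real.continuous_sqrt.tendsto c).comp hlim
    have h2 : Tendsto (fun q : ℕ => Real.sqrt ((q:ℝ)⁻¹)) atTop (nhds 0) := by
      have h := (Real.continuous_sqrt.tendsto 0).comp hq0
      rw [Real.sqrt_zero] at h
      exact h
    have hmul : Tendsto (fun q : ℕ => Real.sqrt ((n q : ℝ)^2 / q) * Real.sqrt ((q:ℝ)⁻¹))
        atTop (nhds 0) := by
      have := h1.mul h2
      simpa using this
    apply hmul.congr'
    filter_upwards [eventually_ge_atTop 1] with q hq
    have hqpos : (0:ℝ) < q := by exact_mod_cast hq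
    rw [← Real.sqrt_mul (by positivity)]
    have e : (n q : ℝ)^2 / q * ((q:ℝ))⁻¹ = ((n q : ℝ) / q)^2 := by
      field_simp
    rw [e, Real.sqrt_sq (by positivity)]
  -- lower exponent limit
  have hlow : Tendsto (fun q : ℕ => (n q : ℝ)^2 / ((q:ℝ) - n q + 1)) atTop (nhds c) := by
    have hden : Tendsto (fun q : ℕ => ((q:ℝ) - n q + 1) / q) atTop (nhds 1) := by
      have hbase : Tendsto (fun q : ℕ => 1 - (n q : ℝ)/q + ((q:ℝ))⁻¹) atTop (nhds 1) := by
        have := ((tendsto_const_nhds (x := (1:ℝ))).sub hfrac).add hq0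
        simpa using this
      apply hbase.congr'
      filter_upwards [eventually_ge_atTop 1] with q hq
      have hqpos : (0:ℝ) < q := by exact_mod_cast hq
      field_simp
    have hdiv := hlim.div hden one_ne_zero
    rw [div_one] at hdiv
    apply hdiv.congr'
    filter_upwards [eventually_ge_atTop 1] with q hq
    have hqpos : (0:ℝ) < q := by exact_mod_cast hq
    have hnq : (n q : ℝ) ≤ q := by exact_mod_cast hn q
    have hd : (0:ℝ) < (q:ℝ) - n q + 1 := by linarith
    rw [Pi.div_apply]
    field_simp
  -- upper exponent limit
  have hup : Tendsto (fun q : ℕ => (n q : ℝ)^2 / ((q:ℝ) + n q)) atTop (nhds c) := by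
    have hden : Tendsto (fun q : ℕ => ((q:ℝ) + n q) / q) atTop (nhds 1) := by
      have hbase : Tendsto (fun q : ℕ => 1 + (n q : ℝ)/q) atTop (nhds 1) := by
        have := (tendsto_const_nhds (x := (1:ℝ))).add hfrac
        simpa using this
      apply hbase.congr'
      filter_upwards [eventually_ge_atTop 1] with q hq
      have hqpos : (0:ℝ) < q := by exact_mod_cast hq
      field_simp
    have hdiv := hlim.div hden one_ne_zero
    rw [div_one] at hdiv
    apply hdiv.congr'
    filter_upwards [eventually_ge_atTop 1] with q hq
    have hqpos : (0:ℝ) < q := by exact_mod_cast hq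
    have hnq : (0:ℝ) ≤ (n q : ℝ) := by positivity
    have hd : (0:ℝ) < (q:ℝ) + n q := by linarith
    rw [Pi.div_apply]
    field_simp
  have hg : Tendsto (fun q : ℕ => Real.exp (-((n q : ℝ)^2 / ((q:ℝ) - n q + 1))))
      atTop (nhds (Real.exp (-c))) := (Real.continuous_exp.tendsto (-c)).comp hlow.neg
  have hh : Tendsto (fun q : ℕ => Real.exp (-((n q : ℝ)^2 / ((q:ℝ) + n q))))
      atTop (nhds (Real.exp (-c))) := (Real.continuous_exp.tendsto (-c)).comp hup.neg
  apply tendsto_of_tendsto_of_tendsto_of_le_of_le hg hh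
  · intro q
    have hpos : (0:ℝ) < ((2*q).choose q : ℝ) := by
      exact_mod_cast Nat.choose_pos (by omega)
    have heq : (((2*q).choose (q - n q) : ℝ)) / ((2*q).choose q : ℝ) =
        ∏ j ∈ Finset.range (n q), ((q:ℝ) - j) / ((q:ℝ) + j + 1) := by
      rw [choose_ratio_aux q (n q) (hn q)]
      field_simp
    dsimp only
    rw [heq]
    exact prod_lower_aux q (n q) (hn q)
  · intro q
    have hpos : (0:ℝ) < ((2*q).choose q : ℝ) := by
      exact_mod_cast Nat.choose_pos (by omega)
    have heq : (((2*q).choose (q - n q) : ℝ)) / ((2*q).choose q : ℝ) =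
        ∏ j ∈ Finset.range (n q), ((q:ℝ) - j) / ((q:ℝ) + j + 1) := by
      rw [choose_ratio_aux q (n q) (hn q)]
      field_simp
    dsimp only
    rw [heq]
    exact prod_upper_aux q (n q) (hn q)
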